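/- arXiv:1301.2418 — 2 statements merged into one kernel-verified Lean document; each statement's English description precedes it below -/
import Mathlib

section
/- Let $k$ be an algebraically closed field, let $f_1,\ldots,f_p$ be binomials in $k[U_1,\ldots,U_n]$ generating an ideal $I$, and let $u_1(t,z),\ldots,u_n(t,z) \in k[[t,z]]$ be units (i.e., $u_j(0,0) \neq 0$). Suppose $\sqrt{I} = I_1 \cap \cdots \cap I_q$ with each $I_l$ prime, and $\sqrt{I}^e \subseteq I$. If $f_l(u_1,\ldots,u_n) \in (t,z)^{qei}$ for all $1 \le l \le p$, then there exists an index $m$ such that $g(u_1,\ldots,u_n) \in (t,z)^{i}$ for all $g \in I_m$. -/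
/-- `F ∈ (t,z)^i` in `k[[t,z]] = (k[[t]])[[z]]`: all coefficients of
total degree `< i` vanish.  Here `b` is the exponent of `z` and `a` that of `t`. -/
def Mem2 {k : Type*} [Field k] (i : ℕ) (F : PowerSeries (PowerSeries k)) : Prop :=
  ∀ a b : ℕ, a + b < i → PowerSeries.coeff (R := k) a (PowerSeries.coeff (R := PowerSeries k) b F) = 0

open Finset

noncomputable section BinAux

variable {k : Type*} [Field k]

/-- total coefficient -/
def C2 (a b : ℕ) (F : PowerSeries (PowerSeries k)) : k :=
  PowerSeries.coeff (R := k) a (PowerSeries.coeff (R := PowerSeries k) b F)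

lemma c2_mul (a b : ℕ) (F G : PowerSeries (PowerSeries k)) :
    C2 a b (F * G) =
      ∑ p ∈ antidiagonal b, ∑ r ∈ antidiagonal a,
        C2 r.1 p.1 F * C2 r.2 p.2 G := by
  simp only [C2]
  rw [PowerSeries.coeff_mul, map_sum]
  exact Finset.sum_congr rfl fun p _ => PowerSeries.coeff_mul _ _ _

def Lead (F : PowerSeries (PowerSeries k)) (a b : ℕ) : Prop :=
  C2 a b F ≠ 0 ∧ ∀ a' b' : ℕ,
    (a' + b' < a + b ∨ (a' + b' = a + b ∧ a' < a)) → C2 a' b' F = 0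

lemma term_zero {F G : PowerSeries (PowerSeries k)} {a1 b1 a2 b2 : ℕ}
    (hF : Lead F a1 b1) (hG : Lead G a2 b2) {r1 p1 r2 p2 : ℕ}
    (h : r1 + p1 + r2 + p2 < a1 + b1 + a2 + b2 ∨
      (r1 + p1 + r2 + p2 = a1 + b1 + a2 + b2 ∧ r1 + r2 ≤ a1 + a2 ∧
        ¬(r1 = a1 ∧ p1 = b1 ∧ r2 = a2 ∧ p2 = b2))) :
    C2 r1 p1 F * C2 r2 p2 G = 0 := by
  rcases lt_trichotomy (r1 + p1) (a1 + b1) with h1 | h1 | h1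
  · exact mul_eq_zero_of_left (hF.2 _ _ (Or.inl h1)) _
  · rcases lt_trichotomy r1 a1 with h2 | h2 | h2
    · exact mul_eq_zero_of_left (hF.2 _ _ (Or.inr ⟨h1, h2⟩)) _
    · -- r1 = a1, p1 = b1
      have hp1 : p1 = b1 := by omega
      rcases h with h | ⟨hS, hr, hne⟩
      · rcases lt_trichotomy (r2 + p2) (a2 + b2) with h3 | h3 | h3
        · exact mul_eq_zero_of_right _ (hG.2 _ _ (Or.inl h3))
        · omega
        · omega
      · rcases lt_trichotomy r2 a2 with h3 | h3 | h3
        · rcases lt_or_eq_of_le (show r2 + p2 ≤ a2 + b2 by omega) with h4 | h4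
          · exact mul_eq_zero_of_right _ (hG.2 _ _ (Or.inl h4))
          · exact mul_eq_zero_of_right _ (hG.2 _ _ (Or.inr ⟨h4, h3⟩))
        · -- r2 = a2 then p2 = b2, contradiction
          omega
        · omega
    · -- r1 > a1
      rcases h with h | ⟨hS, hr, _⟩
      · exact mul_eq_zero_of_right _ (hG.2 _ _ (Or.inl (by omega)))
      · exact mul_eq_zero_of_right _ (hG.2 _ _ (Or.inr ⟨by omega, by omega⟩))
  · -- r1+p1 > a1+b1 hence r2+p2 < a2+b2
    exact mul_eq_zero_of_right _ (hG.2 _ _ (Or.inl (by omega)))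

lemma lead_mul {F G : PowerSeries (PowerSeries k)} {a1 b1 a2 b2 : ℕ}
    (hF : Lead F a1 b1) (hG : Lead G a2 b2) :
    Lead (F * G) (a1 + a2) (b1 + b2) := by
  constructor
  · rw [c2_mul]
    rw [Finset.sum_eq_single_of_mem (b1, b2) (by simp [Finset.mem_antidiagonal])]
    · rw [Finset.sum_eq_single_of_mem (a1, a2) (by simp [Finset.mem_antidiagonal])]
      · exact mul_ne_zero hF.1 hG.1
      · intro r hr hne
        rw [Finset.HasAntidiagonal.mem_antidiagonal] at hr
        refine term_zero hF hG (Or.inr ⟨by omega, by omega, fun ⟨e1, _, e2, _⟩ => ?_⟩)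
        exact hne (Prod.ext e1 e2)
    · intro p hp hne
      rw [Finset.HasAntidiagonal.mem_antidiagonal] at hp
      refine Finset.sum_eq_zero fun r hr => ?_
      rw [Finset.HasAntidiagonal.mem_antidiagonal] at hr
      refine term_zero hF hG (Or.inr ⟨by omega, by omega, fun ⟨_, e1, _, e2⟩ => ?_⟩)
      exact hne (Prod.ext e1 e2)
  · intro a' b' h
    rw [c2_mul]
    refine Finset.sum_eq_zero fun p hp => Finset.sum_eq_zero fun r hr => ?_
    rw [Finset.HasAntidiagonal.mem_antidiagonal] at hp hr
    rcases h with h | ⟨h, h'⟩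
    · exact term_zero hF hG (Or.inl (by omega))
    · exact term_zero hF hG (Or.inr ⟨by omega, by omega, by omega⟩)

lemma lead_one : Lead (1 : PowerSeries (PowerSeries k)) 0 0 := by
  constructor
  · simp [C2]
  · intro a' b' h; omega

lemma lead_prod {ι : Type*} (s : Finset ι) (F : ι → PowerSeries (PowerSeries k))
    (a b : ι → ℕ) (h : ∀ m ∈ s, Lead (F m) (a m) (b m)) :
    Lead (∏ m ∈ s, F m) (∑ m ∈ s, a m) (∑ m ∈ s, b m) := by
  classical
  induction s using Finset.induction_on with
  | empty => simpa using lead_one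
  | insert x s' hx ih =>
    rw [Finset.prod_insert hx, Finset.sum_insert hx, Finset.sum_insert hx]
    exact lead_mul (h x (Finset.mem_insert_self _ _))
      (ih fun m hm => h m (Finset.mem_insert_of_mem hm))

lemma lead_pow {F : PowerSeries (PowerSeries k)} {a b : ℕ} (hF : Lead F a b) :
    ∀ e : ℕ, Lead (F ^ e) (e * a) (e * b)
  | 0 => by simpa using lead_one
  | e + 1 => by
    rw [pow_succ, add_mul, one_mul, add_mul, one_mul]
    exact lead_mul (lead_pow hF e) hF

lemma not_mem2_iff {i : ℕ} {F : PowerSeries (PowerSeries k)} :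
    ¬ Mem2 i F ↔ ∃ a b : ℕ, a + b < i ∧ C2 a b F ≠ 0 := by
  unfold Mem2 C2
  push_neg
  tauto

lemma exists_lead_of_not_mem2 {i : ℕ} {F : PowerSeries (PowerSeries k)}
    (h : ¬ Mem2 i F) : ∃ a b : ℕ, Lead F a b ∧ a + b < i := by
  classical
  obtain ⟨a0, b0, hab, h0⟩ := not_mem2_iff.mp h
  have hex : ∃ N : ℕ, ∃ a b : ℕ, a + b = N ∧ C2 a b F ≠ 0 := ⟨a0 + b0, a0, b0, rfl, h0⟩
  set N := Nat.find hex with hN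
  have hex2 : ∃ a : ℕ, ∃ b : ℕ, a + b = N ∧ C2 a b F ≠ 0 := Nat.find_spec hex
  set A := Nat.find hex2 with hA
  obtain ⟨B, hAB, hNE⟩ := Nat.find_spec hex2
  refine ⟨A, B, ⟨hNE, ?_⟩, ?_⟩
  · intro a' b' hlt
    by_contra hne
    rcases hlt with hlt | ⟨heq, hlt⟩
    · exact Nat.find_min hex (by omega : a' + b' < N) ⟨a', b', rfl, hne⟩
    · exact Nat.find_min hex2 (by omega : a' < A) ⟨b', by omega, hne⟩
  · have : N ≤ a0 + b0 := Nat.find_min' hex ⟨a0, b0, rfl, h0⟩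
    omega

lemma mem2_mul_left {j : ℕ} {X Y : PowerSeries (PowerSeries k)}
    (hY : Mem2 j Y) : Mem2 j (X * Y) := by
  intro a b hab
  have := c2_mul a b X Y
  unfold C2 at this
  rw [this]
  refine Finset.sum_eq_zero fun p hp => Finset.sum_eq_zero fun r hr => ?_
  rw [Finset.HasAntidiagonal.mem_antidiagonal] at hp hr
  exact mul_eq_zero_of_right _ (hY r.2 p.2 (by omega))

lemma mem2_of_mem_span {j n : ℕ} (u : Fin n → PowerSeries (PowerSeries k))
    (S : Set (MvPolynomial (Fin n) k)) (hS : ∀ s ∈ S, Mem2 j (MvPolynomial.aeval u s))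
    {g : MvPolynomial (Fin n) k} (hg : g ∈ Ideal.span S) :
    Mem2 j (MvPolynomial.aeval u g) := by
  refine Submodule.span_induction (fun s hs => hS s hs) ?_ ?_ ?_ hg
  · intro a b _; simp
  · intro x y _ _ hx hy a b hab
    rw [map_add, map_add, map_add, hx a b hab, hy a b hab, add_zero]
  · intro r x _ hx
    rw [smul_eq_mul, map_mul]
    exact mem2_mul_left hx

end BinAux
theorem binomial_units_land_in_some_component
    {k : Type*} [Field k] [IsAlgClosed k] {n p q : ℕ} (hq : 0 < q)
    (f : Fin p → MvPolynomial (Fin n) k)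
    (hbin : ∀ l, ∃ (a b : k) (α β : Fin n →₀ ℕ),
      f l = MvPolynomial.monomial α a + MvPolynomial.monomial β b)
    (I : Ideal (MvPolynomial (Fin n) k)) (hI : I = Ideal.span (Set.range f))
    (P : Fin q → Ideal (MvPolynomial (Fin n) k)) (hP : ∀ l, (P l).IsPrime)
    (hrad : I.radical = ⨅ l, P l)
    (e : ℕ) (hpow : I.radical ^ e ≤ I)
    (u : Fin n → PowerSeries (PowerSeries k))
    (hu : ∀ j, PowerSeries.constantCoeff (R := k)
        (PowerSeries.constantCoeff (R := PowerSeries k) (u j)) ≠ 0)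
    (i : ℕ)
    (h : ∀ l, Mem2 (q * e * i) (MvPolynomial.aeval u (f l))) :
    ∃ m : Fin q, ∀ g ∈ P m, Mem2 i (MvPolynomial.aeval u g) := by
  classical
  rcases Nat.eq_zero_or_pos i with hi | hi
  · exact ⟨⟨0, hq⟩, fun g _ a b hab => absurd hab (by omega)⟩
  rcases Nat.eq_zero_or_pos e with he | he
  · exfalso
    subst he
    have hItop : I = ⊤ := top_le_iff.mp (by simpa using hpow)
    have : (⊤ : Ideal (MvPolynomial (Fin n) k)) ≤ P ⟨0, hq⟩ := by
      calc (⊤ : Ideal (MvPolynomial (Fin n) k)) = I.radical := by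
            rw [hItop, Ideal.radical_top]
        _ = ⨅ l, P l := hrad
        _ ≤ P ⟨0, hq⟩ := iInf_le _ _
    exact (hP ⟨0, hq⟩).ne_top (top_le_iff.mp this)
  by_contra hcon
  push_neg at hcon
  choose g hg hng using hcon
  obtain ⟨a, b, hlead, hlt⟩ :
      ∃ (a b : Fin q → ℕ), (∀ m, Lead (MvPolynomial.aeval u (g m)) (a m) (b m)) ∧
        ∀ m, a m + b m < i := by
    choose a b h1 h2 using fun m => exists_lead_of_not_mem2 (hng m)
    exact ⟨a, b, h1, h2⟩
  set G : MvPolynomial (Fin n) k := ∏ m, g m with hG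
  have hGrad : G ∈ I.radical := by
    rw [hrad, Ideal.mem_iInf]
    intro l
    rw [hG, ← Finset.mul_prod_erase Finset.univ g (Finset.mem_univ l)]
    exact Ideal.mul_mem_right _ _ (hg l)
  have hGe : G ^ e ∈ I := hpow (Ideal.pow_mem_pow hGrad e)
  have hGeval : Mem2 (q * e * i) (MvPolynomial.aeval u (G ^ e)) := by
    refine mem2_of_mem_span u (Set.range f) ?_ (hI ▸ hGe)
    rintro _ ⟨l, rfl⟩
    exact h l
  have hGlead : Lead (MvPolynomial.aeval u G) (∑ m, a m) (∑ m, b m) := by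
    rw [hG, map_prod]
    exact lead_prod _ _ _ _ fun m _ => hlead m
  have hGelead : Lead (MvPolynomial.aeval u (G ^ e)) (e * ∑ m, a m) (e * ∑ m, b m) := by
    rw [map_pow]
    exact lead_pow hGlead e
  have hsum : (∑ m, a m) + (∑ m, b m) < q * i := by
    have h1 : (∑ m, a m) + (∑ m, b m) = ∑ m, (a m + b m) := (Finset.sum_add_distrib).symm
    have h2 : ∑ m : Fin q, (a m + b m) ≤ ∑ _m : Fin q, (i - 1) :=
      Finset.sum_le_sum fun m _ => by have := hlt m; omega
    have h3 : ∑ _m : Fin q, (i - 1) = q * (i - 1) := by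
      rw [Finset.sum_const, Finset.card_univ, Fintype.card_fin, smul_eq_mul]
    have h4 : q * (i - 1) < q * i := (Nat.mul_lt_mul_left hq).mpr (by omega)
    omega
  have hbig : e * (∑ m, a m) + e * (∑ m, b m) < q * e * i := by
    have : e * ((∑ m, a m) + (∑ m, b m)) < e * (q * i) :=
      (Nat.mul_lt_mul_left he).mpr hsum
    calc e * (∑ m, a m) + e * (∑ m, b m) = e * ((∑ m, a m) + (∑ m, b m)) := by ring
      _ < e * (q * i) := this
      _ = q * e * i := by ring
  exact hGelead.1 (hGeval _ _ hbig)
end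

section
/- Let $k$ be a field and let $x(t,z), y(t,z) \in k[[t,z]]$ with $x = u\cdot(x_0(t) + x_1(t)z + x_2(t)z^2 + z^3)$ and $y = v\cdot(y_0(t) + y_1(t)z + z^2)$ in Weierstrass form ($u, v$ units, $x_j, y_j \in (t)k[[t]]$). If $x^2 - y^3 \in (t,z)^i$ with $i > 6$, then $u^2 - v^3 \in (t,z)^{i-6}$ and the coefficient of $z^5$ in $(x_0 + x_1 z + x_2 z^2 + z^3)^2 - (y_0 + y_1 z + z^2)^3$, namely $2x_2 - 3y_1$, lies in $(t)^{i-6}$. -/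
namespace CuspCompare

open PowerSeries Finset

variable {k : Type*} [Field k]

theorem czero {h : PowerSeries k} {m n : ℕ} (hd : (X : PowerSeries k) ^ m ∣ h)
    (hnm : n < m) : coeff (R := k) n h = 0 := by
  obtain ⟨e, rfl⟩ := hd
  rw [mul_comm, coeff_mul_X_pow', if_neg (by omega)]

theorem m2_lmul {i : ℕ} {F : PowerSeries (PowerSeries k)} (G : PowerSeries (PowerSeries k))
    (h : Mem2 i F) : Mem2 i (G * F) := by
  intro a b hab
  rw [coeff_mul, map_sum]
  refine Finset.sum_eq_zero fun p hp => ?_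
  have hps := Finset.HasAntidiagonal.mem_antidiagonal.mp hp
  rw [coeff_mul]
  refine Finset.sum_eq_zero fun w hw => ?_
  have hws := Finset.HasAntidiagonal.mem_antidiagonal.mp hw
  rw [h w.2 p.2 (by omega), mul_zero]

theorem m2_mul {i j : ℕ} {F G : PowerSeries (PowerSeries k)}
    (hF : Mem2 i F) (hG : Mem2 j G) : Mem2 (i + j) (F * G) := by
  intro a b hab
  rw [coeff_mul, map_sum]
  refine Finset.sum_eq_zero fun p hp => ?_
  have hps := Finset.HasAntidiagonal.mem_antidiagonal.mp hp
  rw [coeff_mul]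
  refine Finset.sum_eq_zero fun w hw => ?_
  have hws := Finset.HasAntidiagonal.mem_antidiagonal.mp hw
  rcases (by omega : w.1 + p.1 < i ∨ w.2 + p.2 < j) with hc | hc
  · rw [hF w.1 p.1 hc, zero_mul]
  · rw [hG w.2 p.2 hc, mul_zero]

theorem m2_sub {i : ℕ} {F G : PowerSeries (PowerSeries k)}
    (hF : Mem2 i F) (hG : Mem2 i G) : Mem2 i (F - G) := by
  intro a b hab
  rw [map_sub, map_sub, hF a b hab, hG a b hab, sub_zero]

theorem mem2_of_pack {A : PowerSeries (PowerSeries k)}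
    (hA : ∀ b, (X : PowerSeries k) ^ (6 - b) ∣ coeff (R := PowerSeries k) b A) : Mem2 6 A := by
  intro a b hab
  exact czero (hA b) (by omega)

theorem key {N : ℕ} {A q G : PowerSeries (PowerSeries k)}
    (hA6 : coeff (R := PowerSeries k) 6 A = 1)
    (hAtop : ∀ b, 6 < b → coeff (R := PowerSeries k) b A = 0)
    (hAlow : ∀ b, b < 6 → (X : PowerSeries k) ^ (6 - b) ∣ coeff (R := PowerSeries k) b A)
    (hG : Mem2 N G)
    (hr : ∀ m, 6 ≤ m → coeff (R := PowerSeries k) m (G - q * A) = 0) :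
    Mem2 (N - 6) q := by
  intro a
  induction a using Nat.strong_induction_on with
  | _ a IH =>
    intro b hab
    have h1 : coeff (R := PowerSeries k) (b + 6) (q * A) = coeff (R := PowerSeries k) (b + 6) G := by
      have h0 := hr (b + 6) (by omega)
      rw [map_sub, sub_eq_zero] at h0
      exact h0.symm
    have h2 : coeff (R := k) a (coeff (R := PowerSeries k) (b + 6) (q * A)) = 0 := by
      rw [h1]; exact hG a (b + 6) (by omega)
    rw [coeff_mul, map_sum, Finset.sum_eq_single ((b, 6) : ℕ × ℕ)] at h2
    · rwa [hA6, mul_one] at h2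
    · rintro ⟨p1, p2⟩ hp hne
      have hps : p1 + p2 = b + 6 := Finset.HasAntidiagonal.mem_antidiagonal.mp hp
      rcases lt_trichotomy p2 6 with hlt | heq | hgt
      · obtain ⟨e, he⟩ := hAlow p2 hlt
        rw [he, show coeff (R := PowerSeries k) p1 q * ((X : PowerSeries k) ^ (6 - p2) * e)
              = (coeff (R := PowerSeries k) p1 q * e) * (X : PowerSeries k) ^ (6 - p2) by ring,
          coeff_mul_X_pow']
        split_ifs with hle
        · rw [coeff_mul]
          refine Finset.sum_eq_zero fun w hw => ?_
          have hws := Finset.HasAntidiagonal.mem_antidiagonal.mp hw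
          rw [IH w.1 (by omega) p1 (by omega), zero_mul]
        · rfl
      · exact absurd (by simp only [Prod.mk.injEq]; omega : (p1, p2) = ((b, 6) : ℕ × ℕ)) hne
      · rw [hAtop p2 hgt, mul_zero, map_zero]
    · intro hmem
      exact absurd (Finset.HasAntidiagonal.mem_antidiagonal.mpr (by omega)) hmem

end CuspCompare

open CuspCompare PowerSeries in
theorem x_sq_sub_y_cube_comparison
    {k : Type*} [Field k]
    (u v : PowerSeries (PowerSeries k)) (hu : IsUnit u) (hv : IsUnit v)
    (x0 x1 x2 y0 y1 : PowerSeries k)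
    (hx0 : (PowerSeries.X : PowerSeries k) ∣ x0)
    (hx1 : (PowerSeries.X : PowerSeries k) ∣ x1)
    (hx2 : (PowerSeries.X : PowerSeries k) ∣ x2)
    (hy0 : (PowerSeries.X : PowerSeries k) ∣ y0)
    (hy1 : (PowerSeries.X : PowerSeries k) ∣ y1)
    (x y : PowerSeries (PowerSeries k))
    (hx : x = u * (PowerSeries.C x0 + PowerSeries.C x1 * PowerSeries.X
        + PowerSeries.C x2 * PowerSeries.X ^ 2 + PowerSeries.X ^ 3))
    (hy : y = v * (PowerSeries.C y0 + PowerSeries.C y1 * PowerSeries.X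
        + PowerSeries.X ^ 2))
    (i : ℕ) (hi : 6 < i) (h : Mem2 i (x ^ 2 - y ^ 3)) :
    Mem2 (i - 6) (u ^ 2 - v ^ 3) ∧
      (PowerSeries.X : PowerSeries k) ^ (i - 6) ∣ (2 * x2 - 3 * y1) := by
  classical
  set P : PowerSeries (PowerSeries k) := PowerSeries.C x0
      + PowerSeries.C x1 * PowerSeries.X
      + PowerSeries.C x2 * PowerSeries.X ^ 2 + PowerSeries.X ^ 3 with hPdef
  set Q : PowerSeries (PowerSeries k) := PowerSeries.C y0
      + PowerSeries.C y1 * PowerSeries.X + PowerSeries.X ^ 2 with hQdef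
  -- basic coefficient descriptions
  have cP : ∀ n, coeff (R := PowerSeries k) n P =
      if n = 0 then x0 else if n = 1 then x1 else if n = 2 then x2 else if n = 3 then 1 else 0 := by
    intro n
    simp only [hPdef, map_add, coeff_C, coeff_C_mul, coeff_X, coeff_X_pow,
      mul_ite, mul_one, mul_zero]
    split_ifs <;> first | ring1 | (exfalso; omega)
  have cQ : ∀ n, coeff (R := PowerSeries k) n Q =
      if n = 0 then y0 else if n = 1 then y1 else if n = 2 then 1 else 0 := by
    intro n
    simp only [hQdef, map_add, coeff_C, coeff_C_mul, coeff_X, coeff_X_pow,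
      mul_ite, mul_one, mul_zero]
    split_ifs <;> first | ring1 | (exfalso; omega)

  -- Part A1 : `t^3 | x0` and `t^2 | y0` via orders at `z = 0`
  have hcP0 : constantCoeff (R := PowerSeries k) P = x0 := by
    simp [hPdef]
  have hcQ0 : constantCoeff (R := PowerSeries k) Q = y0 := by
    simp [hQdef]
  have hf0eq : (constantCoeff (R := PowerSeries k)) (x ^ 2 - y ^ 3)
      = (constantCoeff (R := PowerSeries k) u) ^ 2 * x0 ^ 2
        - (constantCoeff (R := PowerSeries k) v) ^ 3 * y0 ^ 3 := by
    rw [hx, hy, map_sub, map_pow, map_pow, map_mul, map_mul, hcP0, hcQ0]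
    ring
  have h7 : ((7 : ℕ) : ℕ∞) ≤ ((constantCoeff (R := PowerSeries k) u) ^ 2 * x0 ^ 2
      - (constantCoeff (R := PowerSeries k) v) ^ 3 * y0 ^ 3).order := by
    apply PowerSeries.nat_le_order
    intro m hm
    rw [← hf0eq, ← coeff_zero_eq_constantCoeff_apply]
    exact h m 0 (by omega)
  have hcu : IsUnit (constantCoeff (R := PowerSeries k) u) := hu.map _
  have hcv : IsUnit (constantCoeff (R := PowerSeries k) v) := hv.map _
  have hordG1 : ((constantCoeff (R := PowerSeries k) u) ^ 2 * x0 ^ 2).order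
      = x0.order + x0.order := by
    rw [pow_two x0, PowerSeries.order_mul, PowerSeries.order_mul,
      PowerSeries.order_zero_of_unit (hcu.pow 2), zero_add]
  have hordG2 : ((constantCoeff (R := PowerSeries k) v) ^ 3 * y0 ^ 3).order
      = y0.order + y0.order + y0.order := by
    rw [show y0 ^ 3 = y0 * y0 * y0 by ring, PowerSeries.order_mul, PowerSeries.order_mul,
      PowerSeries.order_mul, PowerSeries.order_zero_of_unit (hcv.pow 3), zero_add]
  have hdiff : ((constantCoeff (R := PowerSeries k) u) ^ 2 * x0 ^ 2).order
        ≠ ((constantCoeff (R := PowerSeries k) v) ^ 3 * y0 ^ 3).order →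
      ((7 : ℕ) : ℕ∞) ≤ min ((constantCoeff (R := PowerSeries k) u) ^ 2 * x0 ^ 2).order
        ((constantCoeff (R := PowerSeries k) v) ^ 3 * y0 ^ 3).order := by
    intro hne
    have hneg : (-((constantCoeff (R := PowerSeries k) v) ^ 3 * y0 ^ 3)).order
        = ((constantCoeff (R := PowerSeries k) v) ^ 3 * y0 ^ 3).order := by
      rw [show -((constantCoeff (R := PowerSeries k) v) ^ 3 * y0 ^ 3)
          = (-1) * ((constantCoeff (R := PowerSeries k) v) ^ 3 * y0 ^ 3) by ring,
        PowerSeries.order_mul,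
        PowerSeries.order_zero_of_unit ((isUnit_one (M := PowerSeries k)).neg), zero_add]
    have hmin := PowerSeries.order_add_of_order_ne
      ((constantCoeff (R := PowerSeries k) u) ^ 2 * x0 ^ 2)
      (-((constantCoeff (R := PowerSeries k) v) ^ 3 * y0 ^ 3)) (by rw [hneg]; exact hne)
    rw [← sub_eq_add_neg, hneg] at hmin
    rw [← hmin]
    exact h7
  have hordx1 : ((1 : ℕ) : ℕ∞) ≤ x0.order := by
    apply PowerSeries.nat_le_order
    intro j hj
    have hj0 : j = 0 := by omega
    subst hj0
    exact czero (m := 1) (by simpa using hx0) (by omega)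
  have hordy1 : ((1 : ℕ) : ℕ∞) ≤ y0.order := by
    apply PowerSeries.nat_le_order
    intro j hj
    have hj0 : j = 0 := by omega
    subst hj0
    exact czero (m := 1) (by simpa using hy0) (by omega)
  have dx0 : (PowerSeries.X : PowerSeries k) ^ 3 ∣ x0 := by
    by_contra hc
    rw [PowerSeries.X_pow_dvd_iff] at hc
    push_neg at hc
    obtain ⟨m, hm3, hmne⟩ := hc
    have hle2 : x0.order ≤ ((2 : ℕ) : ℕ∞) :=
      le_trans (PowerSeries.order_le m hmne) (by exact_mod_cast (by omega : m ≤ 2))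
    by_cases heq : ((constantCoeff (R := PowerSeries k) u) ^ 2 * x0 ^ 2).order
        = ((constantCoeff (R := PowerSeries k) v) ^ 3 * y0 ^ 3).order
    · rw [hordG1, hordG2] at heq
      have hx0top : x0.order ≠ ⊤ := by
        intro hT
        rw [hT] at hle2
        exact absurd hle2 (by simp)
      lift x0.order to ℕ using hx0top with e he
      have hy0top : y0.order ≠ ⊤ := by
        intro hT
        rw [hT] at heq
        simp only [top_add, add_top] at heq
        rw [← Nat.cast_add] at heq
        exact WithTop.natCast_ne_top _ heq
      lift y0.order to ℕ using hy0top with f hf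
      have heqN : e + e = f + f + f := by exact_mod_cast heq
      have he2 : e ≤ 2 := by exact_mod_cast hle2
      have he1 : 1 ≤ e := by exact_mod_cast hordx1
      have hf1 : 1 ≤ f := by exact_mod_cast hordy1
      omega
    · have hmm := le_trans (hdiff heq) (min_le_left _ _)
      rw [hordG1] at hmm
      have h74 : ((7 : ℕ) : ℕ∞) ≤ ((2 : ℕ) : ℕ∞) + ((2 : ℕ) : ℕ∞) :=
        le_trans hmm (add_le_add hle2 hle2)
      exact absurd h74 (by exact_mod_cast (by omega : ¬((7 : ℕ) ≤ 2 + 2)))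
  have dy0 : (PowerSeries.X : PowerSeries k) ^ 2 ∣ y0 := by
    by_contra hc
    rw [PowerSeries.X_pow_dvd_iff] at hc
    push_neg at hc
    obtain ⟨m, hm2, hmne⟩ := hc
    have hyle : y0.order ≤ ((1 : ℕ) : ℕ∞) :=
      le_trans (PowerSeries.order_le m hmne) (by exact_mod_cast (by omega : m ≤ 1))
    have hx3 : ((3 : ℕ) : ℕ∞) ≤ x0.order := by
      apply PowerSeries.nat_le_order
      intro j hj
      exact czero dx0 hj
    have hG1ge : ((6 : ℕ) : ℕ∞) ≤ ((constantCoeff (R := PowerSeries k) u) ^ 2 * x0 ^ 2).order := by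
      rw [hordG1]
      calc ((6 : ℕ) : ℕ∞) = ((3 : ℕ) : ℕ∞) + ((3 : ℕ) : ℕ∞) := by
            rw [← Nat.cast_add]
        _ ≤ _ := add_le_add hx3 hx3
    have hG2le : ((constantCoeff (R := PowerSeries k) v) ^ 3 * y0 ^ 3).order ≤ ((3 : ℕ) : ℕ∞) := by
      rw [hordG2]
      calc y0.order + y0.order + y0.order ≤ ((1 : ℕ) : ℕ∞) + ((1 : ℕ) : ℕ∞) + ((1 : ℕ) : ℕ∞) :=
            add_le_add (add_le_add hyle hyle) hyle
        _ = ((3 : ℕ) : ℕ∞) := by rw [← Nat.cast_add, ← Nat.cast_add]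
    have hne : ((constantCoeff (R := PowerSeries k) u) ^ 2 * x0 ^ 2).order
        ≠ ((constantCoeff (R := PowerSeries k) v) ^ 3 * y0 ^ 3).order := by
      intro hEq
      rw [hEq] at hG1ge
      have h63 := le_trans hG1ge hG2le
      exact absurd h63 (by exact_mod_cast (by omega : ¬((6 : ℕ) ≤ 3)))
    have h73 := le_trans (le_trans (hdiff hne) (min_le_right _ _)) hG2le
    exact absurd h73 (by exact_mod_cast (by omega : ¬((7 : ℕ) ≤ 3)))
  -- convolution helpers
  have cmulS : ∀ (f g : PowerSeries (PowerSeries k)) (n : ℕ), coeff (R := PowerSeries k) n (f * g)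
      = ∑ j ∈ Finset.range (n + 1),
          coeff (R := PowerSeries k) j f * coeff (R := PowerSeries k) (n - j) g := by
    intro f g n
    rw [coeff_mul, Finset.Nat.sum_antidiagonal_eq_sum_range_succ_mk]
  have cmulR : ∀ (f g : PowerSeries k) (n : ℕ), coeff (R := k) n (f * g)
      = ∑ j ∈ Finset.range (n + 1), coeff (R := k) j f * coeff (R := k) (n - j) g := by
    intro f g n
    rw [coeff_mul, Finset.Nat.sum_antidiagonal_eq_sum_range_succ_mk]
  -- Part A2 : `t^2 | x1`
  have hxP : x ^ 2 = u ^ 2 * P ^ 2 := by rw [hx]; ring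
  have hyQ : y ^ 3 = v ^ 3 * Q ^ 3 := by rw [hy]; ring
  have hQdvd : ∀ n, (PowerSeries.X : PowerSeries k) ^ (2 - n) ∣ coeff (R := PowerSeries k) n Q := by
    intro n
    rw [cQ]
    split_ifs with h0 h1 h2
    · subst h0; exact dy0
    · subst h1; simpa using hy1
    · subst h2; simpa using one_dvd _
    · exact dvd_zero _
  have hQ2dvd : ∀ b, (PowerSeries.X : PowerSeries k) ^ (4 - b)
      ∣ coeff (R := PowerSeries k) b (Q ^ 2) := by
    intro b
    rw [pow_two, coeff_mul]
    refine Finset.dvd_sum fun p hp => ?_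
    have hps := Finset.HasAntidiagonal.mem_antidiagonal.mp hp
    have hd := mul_dvd_mul (hQdvd p.1) (hQdvd p.2)
    rw [← pow_add] at hd
    exact dvd_trans (pow_dvd_pow _ (by omega)) hd
  have hQ3dvd : ∀ b, (PowerSeries.X : PowerSeries k) ^ (6 - b)
      ∣ coeff (R := PowerSeries k) b (Q ^ 3) := by
    intro b
    rw [show (Q ^ 3) = Q ^ 2 * Q by ring, coeff_mul]
    refine Finset.dvd_sum fun p hp => ?_
    have hps := Finset.HasAntidiagonal.mem_antidiagonal.mp hp
    have hd := mul_dvd_mul (hQ2dvd p.1) (hQdvd p.2)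
    rw [← pow_add] at hd
    exact dvd_trans (pow_dvd_pow _ (by omega)) hd
  have hy22 : coeff (R := k) 2 (coeff (R := PowerSeries k) 2 (y ^ 3)) = 0 := by
    rw [hyQ]
    exact m2_lmul _ (mem2_of_pack hQ3dvd) 2 2 (by omega)
  have hx22 : coeff (R := k) 2 (coeff (R := PowerSeries k) 2 (x ^ 2)) = 0 := by
    have h22 := h 2 2 (by omega)
    rw [map_sub, map_sub, hy22, sub_zero] at h22
    exact h22
  have hx10 : coeff (R := k) 0 x1 = 0 := czero (m := 1) (by simpa using hx1) (by omega)
  have key22 : coeff (R := k) 2 (coeff (R := PowerSeries k) 2 (x ^ 2))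
      = ((constantCoeff (R := k)) ((constantCoeff (R := PowerSeries k)) u)) ^ 2 * (coeff (R := k) 1 x1) ^ 2 := by
    have cP20 : coeff (R := PowerSeries k) 0 (P ^ 2) = x0 * x0 := by
      rw [pow_two, cmulS]; simp [cP]
    have cP21 : coeff (R := PowerSeries k) 1 (P ^ 2) = x0 * x1 + x1 * x0 := by
      rw [pow_two, cmulS]; simp [Finset.sum_range_succ, cP]
    have cP22 : coeff (R := PowerSeries k) 2 (P ^ 2) = x0 * x2 + x1 * x1 + x2 * x0 := by
      rw [pow_two, cmulS]; simp [Finset.sum_range_succ, cP]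
    have cx20 : coeff (R := k) 0 (x1 * x1) = 0 := by rw [cmulR]; simp [hx10]
    have cx21 : coeff (R := k) 1 (x1 * x1) = 0 := by rw [cmulR]; simp [Finset.sum_range_succ, hx10]
    have cx22 : coeff (R := k) 2 (x1 * x1) = (coeff (R := k) 1 x1) ^ 2 := by
      rw [cmulR]
      simp [Finset.sum_range_succ, hx10]
      ring
    have t2 : coeff (R := k) 2 (coeff (R := PowerSeries k) 2 (u ^ 2) * (x0 * x0)) = 0 :=
      czero (Dvd.dvd.mul_left (dx0.mul_right x0) _) (by omega)
    have t1 : coeff (R := k) 2 (coeff (R := PowerSeries k) 1 (u ^ 2) * (x0 * x1 + x1 * x0)) = 0 :=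
      czero (Dvd.dvd.mul_left (dvd_add (dx0.mul_right x1) (dx0.mul_left x1)) _) (by omega)
    have t0 : coeff (R := k) 2 ((constantCoeff (R := PowerSeries k)) u ^ 2 * (x0 * x2 + x1 * x1 + x2 * x0))
        = ((constantCoeff (R := k)) ((constantCoeff (R := PowerSeries k)) u)) ^ 2 * (coeff (R := k) 1 x1) ^ 2 := by
      rw [mul_add, mul_add, map_add, map_add,
        czero (Dvd.dvd.mul_left (dx0.mul_right x2) _) (by omega : (2:ℕ) < 3),
        czero (Dvd.dvd.mul_left (dx0.mul_left x2) _) (by omega : (2:ℕ) < 3)]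
      rw [zero_add, add_zero, cmulR]
      simp [Finset.sum_range_succ, cx20, cx21, cx22,
        coeff_zero_eq_constantCoeff_apply, map_pow]
    rw [hxP, cmulS]
    rw [Finset.sum_range_succ, Finset.sum_range_succ, Finset.sum_range_succ,
      Finset.sum_range_zero, zero_add]
    norm_num [cP20, cP21, cP22]
    rw [t2, t1, t0]
    ring
  have hx11 : coeff (R := k) 1 x1 = 0 := by
    have h0 : ((constantCoeff (R := k)) ((constantCoeff (R := PowerSeries k)) u)) ^ 2
        * (coeff (R := k) 1 x1) ^ 2 = 0 := by
      rw [← key22]; exact hx22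
    have hUne : ((constantCoeff (R := k)) ((constantCoeff (R := PowerSeries k)) u)) ^ 2 ≠ 0 :=
      pow_ne_zero _ (IsUnit.ne_zero ((hu.map (constantCoeff (R := PowerSeries k))).map
        (constantCoeff (R := k))))
    rcases mul_eq_zero.mp h0 with hcase | hcase
    · exact absurd hcase hUne
    · exact pow_eq_zero_iff (by omega) |>.mp hcase
  have dx1 : (PowerSeries.X : PowerSeries k) ^ 2 ∣ x1 := by
    rw [PowerSeries.X_pow_dvd_iff]
    intro m hm
    rcases (by omega : m = 0 ∨ m = 1) with hm0 | hm0 <;> subst hm0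
    · exact hx10
    · exact hx11
  -- strong divisibility pack for P and P^2
  have hPdvd : ∀ n, (PowerSeries.X : PowerSeries k) ^ (3 - n) ∣ coeff (R := PowerSeries k) n P := by
    intro n
    rw [cP]
    split_ifs with h0 h1 h2 h3
    · subst h0; exact dx0
    · subst h1; exact dx1
    · subst h2; simpa using hx2
    · subst h3; simpa using one_dvd _
    · exact dvd_zero _
  have hAdvd : ∀ b, (PowerSeries.X : PowerSeries k) ^ (6 - b)
      ∣ coeff (R := PowerSeries k) b (P ^ 2) := by
    intro b
    rw [pow_two, coeff_mul]
    refine Finset.dvd_sum fun p hp => ?_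
    have hps := Finset.HasAntidiagonal.mem_antidiagonal.mp hp
    have hd := mul_dvd_mul (hPdvd p.1) (hPdvd p.2)
    rw [← pow_add] at hd
    exact dvd_trans (pow_dvd_pow _ (by omega)) hd
  -- top coefficients
  have cPtop : ∀ n, 3 < n → coeff (R := PowerSeries k) n P = 0 := by
    intro n hn
    rw [cP, if_neg (by omega), if_neg (by omega), if_neg (by omega), if_neg (by omega)]
  have cQtop : ∀ n, 2 < n → coeff (R := PowerSeries k) n Q = 0 := by
    intro n hn
    rw [cQ, if_neg (by omega), if_neg (by omega), if_neg (by omega)]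
  have hAtop : ∀ b, 6 < b → coeff (R := PowerSeries k) b (P ^ 2) = 0 := by
    intro b hb
    rw [pow_two, coeff_mul]
    refine Finset.sum_eq_zero fun p hp => ?_
    have hps := Finset.HasAntidiagonal.mem_antidiagonal.mp hp
    rcases (by omega : 3 < p.1 ∨ 3 < p.2) with hc | hc
    · rw [cPtop p.1 hc, zero_mul]
    · rw [cPtop p.2 hc, mul_zero]
  have hQ2top : ∀ b, 4 < b → coeff (R := PowerSeries k) b (Q ^ 2) = 0 := by
    intro b hb
    rw [pow_two, coeff_mul]
    refine Finset.sum_eq_zero fun p hp => ?_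
    have hps := Finset.HasAntidiagonal.mem_antidiagonal.mp hp
    rcases (by omega : 2 < p.1 ∨ 2 < p.2) with hc | hc
    · rw [cQtop p.1 hc, zero_mul]
    · rw [cQtop p.2 hc, mul_zero]
  have hBtop : ∀ b, 6 < b → coeff (R := PowerSeries k) b (Q ^ 3) = 0 := by
    intro b hb
    rw [show (Q ^ 3) = Q ^ 2 * Q by ring, coeff_mul]
    refine Finset.sum_eq_zero fun p hp => ?_
    have hps := Finset.HasAntidiagonal.mem_antidiagonal.mp hp
    rcases (by omega : 4 < p.1 ∨ 2 < p.2) with hc | hc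
    · rw [hQ2top p.1 hc, zero_mul]
    · rw [cQtop p.2 hc, mul_zero]
  -- sixth and fifth coefficients
  have hA6 : coeff (R := PowerSeries k) 6 (P ^ 2) = 1 := by
    rw [pow_two, cmulS]
    norm_num [Finset.sum_range_succ, cP]
  have hA5 : coeff (R := PowerSeries k) 5 (P ^ 2) = x2 + x2 := by
    rw [pow_two, cmulS]
    norm_num [Finset.sum_range_succ, cP]
  have cQ23 : coeff (R := PowerSeries k) 3 (Q ^ 2) = y1 + y1 := by
    rw [pow_two, cmulS]
    norm_num [Finset.sum_range_succ, cQ]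
  have cQ24 : coeff (R := PowerSeries k) 4 (Q ^ 2) = 1 := by
    rw [pow_two, cmulS]
    norm_num [Finset.sum_range_succ, cQ]
  have hB6 : coeff (R := PowerSeries k) 6 (Q ^ 3) = 1 := by
    rw [show (Q ^ 3) = Q ^ 2 * Q by ring, cmulS]
    rw [Finset.sum_range_succ, Finset.sum_range_succ, Finset.sum_range_succ,
      Finset.sum_range_succ, Finset.sum_range_succ, Finset.sum_range_succ,
      Finset.sum_range_succ, Finset.sum_range_zero]
    norm_num [cQ24, hQ2top 5 (by omega), hQ2top 6 (by omega), cQ,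
      cQtop 3 (by omega), cQtop 4 (by omega), cQtop 5 (by omega), cQtop 6 (by omega)]
  have hB5 : coeff (R := PowerSeries k) 5 (Q ^ 3) = y1 + y1 + y1 := by
    rw [show (Q ^ 3) = Q ^ 2 * Q by ring, cmulS]
    rw [Finset.sum_range_succ, Finset.sum_range_succ, Finset.sum_range_succ,
      Finset.sum_range_succ, Finset.sum_range_succ, Finset.sum_range_succ,
      Finset.sum_range_zero]
    norm_num [cQ23, cQ24, hQ2top 5 (by omega), cQ,
      cQtop 3 (by omega), cQtop 4 (by omega), cQtop 5 (by omega)]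
  -- assembly
  obtain ⟨vu, hvu⟩ := hv
  have hw1 : (↑vu⁻¹ : PowerSeries (PowerSeries k)) * v = 1 := by
    rw [← hvu]; exact vu.inv_mul
  have hGq : (↑vu⁻¹ : PowerSeries (PowerSeries k)) ^ 3 * (x ^ 2 - y ^ 3)
      - ((↑vu⁻¹ : PowerSeries (PowerSeries k)) ^ 3 * u ^ 2 - 1) * P ^ 2 = P ^ 2 - Q ^ 3 := by
    rw [hx, hy]
    linear_combination (-(Q ^ 3) * (((↑vu⁻¹ : PowerSeries (PowerSeries k)) * v) ^ 2
      + (↑vu⁻¹ : PowerSeries (PowerSeries k)) * v + 1)) * hw1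
  have hGmem : Mem2 i ((↑vu⁻¹ : PowerSeries (PowerSeries k)) ^ 3 * (x ^ 2 - y ^ 3)) :=
    m2_lmul _ h
  have hq : Mem2 (i - 6) ((↑vu⁻¹ : PowerSeries (PowerSeries k)) ^ 3 * u ^ 2 - 1) := by
    refine key hA6 hAtop (fun b _ => hAdvd b) hGmem ?_
    intro m hm
    rw [hGq]
    rcases eq_or_lt_of_le hm with hm6 | hm6
    · rw [map_sub, ← hm6, hA6, hB6, sub_self]
    · rw [map_sub, hAtop m hm6, hBtop m hm6, sub_self]
  constructor
  · have hCeq : u ^ 2 - v ^ 3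
        = v ^ 3 * ((↑vu⁻¹ : PowerSeries (PowerSeries k)) ^ 3 * u ^ 2 - 1) := by
      linear_combination (-(u ^ 2) * (((↑vu⁻¹ : PowerSeries (PowerSeries k)) * v) ^ 2
        + (↑vu⁻¹ : PowerSeries (PowerSeries k)) * v + 1)) * hw1
    rw [hCeq]
    exact m2_lmul _ hq
  · have hD : Mem2 i (P ^ 2 - Q ^ 3) := by
      rw [← hGq]
      refine m2_sub hGmem ?_
      have h66 := m2_mul hq (mem2_of_pack hAdvd)
      rwa [(by omega : (i - 6) + 6 = i)] at h66
    rw [PowerSeries.X_pow_dvd_iff]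
    intro m hm
    have h5 : coeff (R := PowerSeries k) 5 (P ^ 2 - Q ^ 3) = 2 * x2 - 3 * y1 := by
      rw [map_sub, hA5, hB5]; ring
    calc coeff (R := k) m (2 * x2 - 3 * y1)
        = coeff (R := k) m (coeff (R := PowerSeries k) 5 (P ^ 2 - Q ^ 3)) := by rw [h5]
      _ = 0 := hD m 5 (by omega)
end
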